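/- Let Δ be a simplicial complex on the vertex set V = {v_1, …, v_n}, let W = {w_1, …, w_n} be a vertex set disjoint from V, and let Γ be the simplicial complex on V ∪ W whose facets are the facets of Δ together with the edges {v_i, w_i} for i = 1, …, n. Let Σ be the simplicial complex on V ∪ W whose faces are exactly the subsets F ⊆ V ∪ W that contain no facet of Γ (so the Stanley–Reisner ideal of Σ equals the facet ideal I(Γ)). Then Σ is pure: every facet of Σ has cardinality n. -/
import Mathlib


/-- `F` is a facet (maximal face) of the simplicial complex `Δ`. -/
def IsFacet {α : Type*} (Δ : Set (Finset α)) (F : Finset α) : Prop :=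
  F ∈ Δ ∧ ∀ G ∈ Δ, F ⊆ G → F = G

/-- Purity of the grafted complex (key step of Corollary 4.4).  Let `Δ` be a simplicial
complex on `V = {v_1, …, v_n}` (here `V` is `Fin n` embedded via `Sum.inl`), `W = {w_1, …,
w_n}` a disjoint vertex set (`Fin n` via `Sum.inr`), and `Γ` the complex on `V ∪ W` whose
facets are the facets of `Δ` together with the edges `{v_i, w_i}`.  Let `Σ` be the complex
on `V ∪ W` whose faces are exactly the subsets containing no facet of `Γ` (so the
Stanley–Reisner ideal of `Σ` is the facet ideal `I(Γ)`).  Then `Σ` is pure: every facet of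
`Σ` has cardinality `n`. -/
theorem stmt17 {n : ℕ} (Δ : Set (Finset (Fin n)))
    (hΔ : ∀ F ∈ Δ, ∀ G ⊆ F, G ∈ Δ)
    (ΓFacets : Set (Finset (Fin n ⊕ Fin n)))
    (hΓ : ΓFacets = {G | ∃ F : Finset (Fin n), IsFacet Δ F ∧ G = F.image Sum.inl} ∪
      {G | ∃ i : Fin n, G = {Sum.inl i, Sum.inr i}})
    (Sface : Finset (Fin n ⊕ Fin n) → Prop)
    (hS : ∀ F, Sface F ↔ ∀ G ∈ ΓFacets, ¬ G ⊆ F) :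
    ∀ F, Sface F → (∀ G, Sface G → F ⊆ G → F = G) → F.card = n := by
  classical
  intro F hF hmax
  have hedge : ∀ i : Fin n, ¬ ({Sum.inl i, Sum.inr i} : Finset (Fin n ⊕ Fin n)) ⊆ F := by
    intro i
    exact (hS F).1 hF _ (by rw [hΓ]; exact Or.inr ⟨i, rfl⟩)
  have hcov : ∀ i : Fin n, Sum.inl i ∈ F ∨ Sum.inr i ∈ F := by
    intro i
    by_contra h
    push_neg at h
    obtain ⟨h1, h2⟩ := h
    have hface : Sface (insert (Sum.inr i) F) := by
      rw [hS]
      intro G hG hGsub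
      rw [hΓ] at hG
      rcases hG with ⟨Fa, hFa, rfl⟩ | ⟨j, rfl⟩
      · have hsub : Fa.image Sum.inl ⊆ F := by
          intro x hx
          have hx' := hGsub hx
          simp only [Finset.mem_image] at hx
          obtain ⟨a, -, rfl⟩ := hx
          rcases Finset.mem_insert.1 hx' with h | h
          · exact absurd h (by simp)
          · exact h
        exact (hS F).1 hF _ (by rw [hΓ]; exact Or.inl ⟨Fa, hFa, rfl⟩) hsub
      · have hl : Sum.inl j ∈ F := by
          have := hGsub (Finset.mem_insert_self _ _)
          rcases Finset.mem_insert.1 this with h | h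
          · simp at h
          · exact h
        have hr := hGsub (by simp : Sum.inr j ∈ ({Sum.inl j, Sum.inr j} : Finset _))
        rcases Finset.mem_insert.1 hr with h | h
        · obtain rfl : j = i := by simpa using h
          exact h1 hl
        · refine hedge j ?_
          intro x hx
          simp only [Finset.mem_insert, Finset.mem_singleton] at hx
          rcases hx with rfl | rfl
          · exact hl
          · exact h
    have := hmax _ hface (Finset.subset_insert _ _)
    exact h2 (this ▸ Finset.mem_insert_self _ _)
  have hinj : Set.InjOn (Sum.elim id id : Fin n ⊕ Fin n → Fin n) F := by
    intro a ha b hb hab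
    rcases a with a | a <;> rcases b with b | b <;> simp only [Sum.elim_inl, Sum.elim_inr, id] at hab
    · rw [hab]
    · subst hab
      refine absurd ?_ (hedge a)
      intro x hx
      simp only [Finset.mem_insert, Finset.mem_singleton] at hx
      rcases hx with rfl | rfl
      · exact ha
      · exact hb
    · subst hab
      refine absurd ?_ (hedge a)
      intro x hx
      simp only [Finset.mem_insert, Finset.mem_singleton] at hx
      rcases hx with rfl | rfl
      · exact hb
      · exact ha
    · rw [hab]
  have himg : F.image (Sum.elim id id) = Finset.univ := by
    apply Finset.eq_univ_of_forall
    intro i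
    rcases hcov i with h | h
    · exact Finset.mem_image.2 ⟨_, h, rfl⟩
    · exact Finset.mem_image.2 ⟨_, h, rfl⟩
  have hc := Finset.card_image_of_injOn hinj
  rw [himg, Finset.card_univ, Fintype.card_fin] at hc
  exact hc.symm
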